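/- arXiv:2203.16890 — 10 statements merged into one kernel-verified Lean document; each statement's English description precedes it below -/
import Mathlib

section
/- Uniqueness of truth (semantic form): Let n ≥ 2 and suppose valuations of formulas (arbitrary on atoms, each connective interpreted by some fixed truth function) are given. If indices j and k are both truths — i.e., for every valuation σ, every index i, every formula φ, and all finite sets Γ, Δ of located formulas, σ satisfies Γ : Δ, (N_i φ, j) iff σ satisfies Γ : Δ ∪ {(φ, m) | m ≠ i}, and the same condition holds with k in place of j — then j = k. -/
/-- Formulas: atoms and unary connectives `N i` for `i : Fin n`
    (the connective `N_{i+1}` of the paper, locating values in `Fin n`). -/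
inductive Formula (n : ℕ) : Type
  | atom : ℕ → Formula n
  | N : Fin n → Formula n → Formula n
  deriving DecidableEq

/-- Located formulas: a formula together with a truth value (location). -/
abbrev LForm (n : ℕ) := Formula n × Fin n

/-- `σ` satisfies the located sequent `Γ : Δ`. -/
def Satisfies {n : ℕ} (σ : Formula n → Fin n) (Γ Δ : Finset (LForm n)) : Prop :=
  (∀ p ∈ Γ, σ p.1 = p.2) → ∃ p ∈ Δ, σ p.1 = p.2

/-- `σ` obeys the truth table (5.27): `σ(N_i φ) = v₁` if `σ(φ) ≠ v_i`,
    and `σ(N_i φ) = v_n` if `σ(φ) = v_i`. -/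
def ObeysTT {n : ℕ} (hn : 2 ≤ n) (σ : Formula n → Fin n) : Prop :=
  ∀ (i : Fin n) (φ : Formula n),
    (σ φ ≠ i → σ (Formula.N i φ) = ⟨0, by omega⟩) ∧
    (σ φ = i → σ (Formula.N i φ) = ⟨n - 1, by omega⟩)

/-- The set of located formulas `{(φ, m) | m ≠ i}`. -/
def locAll {n : ℕ} (φ : Formula n) (i : Fin n) : Finset (LForm n) :=
  (Finset.univ.erase i).image (fun m => (φ, m))

/-- `σ` interprets each connective `N i` by the truth function `f i`. -/
def Compositional {n : ℕ} (f : Fin n → Fin n → Fin n) (σ : Formula n → Fin n) : Prop :=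
  ∀ (i : Fin n) (φ : Formula n), σ (Formula.N i φ) = f i (σ φ)

/-- `j` is a truth: condition `(N_t)` holds semantically for all valuations
    compositional w.r.t. `f`. -/
def IsTruth {n : ℕ} (f : Fin n → Fin n → Fin n) (j : Fin n) : Prop :=
  ∀ σ : Formula n → Fin n, Compositional f σ →
    ∀ (i : Fin n) (φ : Formula n) (Γ Δ : Finset (LForm n)),
      Satisfies σ Γ (insert (Formula.N i φ, j) Δ) ↔ Satisfies σ Γ (Δ ∪ locAll φ i)

/-- Canonical valuation sending all atoms to `x`, compositional w.r.t. `f`. -/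
def canonVal {n : ℕ} (f : Fin n → Fin n → Fin n) (x : Fin n) : Formula n → Fin n
  | Formula.atom _ => x
  | Formula.N i φ => f i (canonVal f x φ)

lemma canonVal_comp {n : ℕ} (f : Fin n → Fin n → Fin n) (x : Fin n) :
    Compositional f (canonVal f x) := fun _ _ => rfl

lemma truth_char {n : ℕ} {f : Fin n → Fin n → Fin n} {j : Fin n} (hj : IsTruth f j)
    (i x : Fin n) : f i x = j ↔ x ≠ i := by
  have h := hj (canonVal f x) (canonVal_comp f x) i (Formula.atom 0) ∅ ∅
  simp only [Satisfies, Finset.notMem_empty, false_implies, implies_true, forall_true_left,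
    Finset.empty_union, Finset.mem_insert] at h
  constructor
  · intro hfix
    obtain ⟨p, hp, hep⟩ := h.mp ⟨(Formula.N i (Formula.atom 0), j), by simp, hfix⟩
    simp only [locAll, Finset.mem_image, Finset.mem_erase] at hp
    obtain ⟨m, ⟨hmi, _⟩, rfl⟩ := hp
    simp only [canonVal] at hep
    exact hep ▸ hmi
  · intro hx
    obtain ⟨p, hp, hep⟩ := h.mpr ⟨(Formula.atom 0, x), by
      simp [locAll, Finset.mem_image]; exact hx, rfl⟩
    rcases hp with rfl | h2
    · exact hep
    · exact h2.elim
  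
/-- Uniqueness of truth (semantic form). -/
theorem uniqueness_of_truth {n : ℕ} (hn : 2 ≤ n) (f : Fin n → Fin n → Fin n)
    (j k : Fin n) (hj : IsTruth f j) (hk : IsTruth f k) : j = k := by
  have h01 : (⟨1, by omega⟩ : Fin n) ≠ ⟨0, by omega⟩ := by simp [Fin.ext_iff]
  have h1 := (truth_char hj ⟨0, by omega⟩ ⟨1, by omega⟩).mpr h01
  have h2 := (truth_char hk ⟨0, by omega⟩ ⟨1, by omega⟩).mpr h01
  rw [h1] at h2; exact h2
end

section
/- Uniqueness of falsity (semantic form): Let n ≥ 2 and suppose valuations of formulas (arbitrary on atoms, each connective interpreted by some fixed truth function) are given. If indices j and k are both falsities — i.e., for every valuation σ, every index i, every formula φ, and all finite sets Γ, Δ of located formulas, σ satisfies Γ : Δ, (N_i φ, j) iff σ satisfies Γ : Δ, (φ, i), and the same condition holds with k in place of j — then j = k. -/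
/-- `j` is a falsity: condition `(N_f)` holds semantically for all valuations
    compositional w.r.t. `f`. -/
def IsFalsity {n : ℕ} (f : Fin n → Fin n → Fin n) (j : Fin n) : Prop :=
  ∀ σ : Formula n → Fin n, Compositional f σ →
    ∀ (i : Fin n) (φ : Formula n) (Γ Δ : Finset (LForm n)),
      Satisfies σ Γ (insert (Formula.N i φ, j) Δ) ↔ Satisfies σ Γ (insert (φ, i) Δ)

/-- Canonical compositional valuation with all atoms valued `i`. -/
def evalF {n : ℕ} (f : Fin n → Fin n → Fin n) (i : Fin n) : Formula n → Fin n
  | Formula.atom _ => i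
  | Formula.N m φ => f m (evalF f i φ)

lemma evalF_comp {n : ℕ} (f : Fin n → Fin n → Fin n) (i : Fin n) :
    Compositional f (evalF f i) := fun _ _ => rfl

lemma falsity_key {n : ℕ} (f : Fin n → Fin n → Fin n) (j : Fin n)
    (hj : IsFalsity f j) (i : Fin n) : f i i = j := by
  have h := hj (evalF f i) (evalF_comp f i) i (Formula.atom 0) ∅ ∅
  simp only [Satisfies] at h
  have h2 : ∃ p ∈ insert ((Formula.atom 0 : Formula n), i) (∅ : Finset (LForm n)),
      evalF f i p.1 = p.2 := ⟨(Formula.atom 0, i), by simp [evalF]⟩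
  have h3 := (h.mpr (fun _ => h2)) (by simp)
  obtain ⟨p, hp, hval⟩ := h3
  simp only [Finset.mem_insert, Finset.notMem_empty, or_false] at hp
  subst hp
  simpa [evalF] using hval

/-- Uniqueness of falsity (semantic form). -/
theorem uniqueness_of_falsity {n : ℕ} (hn : 2 ≤ n) (f : Fin n → Fin n → Fin n)
    (j k : Fin n) (hj : IsFalsity f j) (hk : IsFalsity f k) : j = k := by
  rw [← falsity_key f j hj j, ← falsity_key f k hk j]
end

section
/- Soundness of the vacuous elimination rule (N_k E_j): for every n ≥ 3, every valuation σ, all indices k and j with j ≠ 1 and j ≠ n, every formula φ, and all finite sets Γ, Δ of located formulas: σ satisfies Γ : Δ, (N_k φ, j) if and only if σ satisfies Γ : Δ. -/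
/-- Soundness of the vacuous elimination rule `(N_k E_j)` for `j ≠ 1, n`. -/
theorem vacuous_elim_sound {n : ℕ} (hn : 3 ≤ n) (σ : Formula n → Fin n)
    (hσ : ObeysTT (by omega) σ) (k j : Fin n)
    (hj1 : j ≠ ⟨0, by omega⟩) (hjn : j ≠ ⟨n - 1, by omega⟩)
    (φ : Formula n) (Γ Δ : Finset (LForm n)) :
    Satisfies σ Γ (insert (Formula.N k φ, j) Δ) ↔ Satisfies σ Γ Δ := by
  have hne : σ (Formula.N k φ) ≠ j := by
    by_cases h : σ φ = k
    · rw [(hσ k φ).2 h]; exact fun e => hjn e.symm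
    · rw [(hσ k φ).1 h]; exact fun e => hj1 e.symm
  constructor
  · intro h hΓ
    obtain ⟨p, hp, he⟩ := h hΓ
    rcases Finset.mem_insert.mp hp with rfl | hp
    · exact absurd he hne
    · exact ⟨p, hp, he⟩
  · intro h hΓ
    obtain ⟨p, hp, he⟩ := h hΓ
    exact ⟨p, Finset.mem_insert_of_mem hp, he⟩
end

section
/- Soundness of the coordination rule (c_{i,j}): for every n ≥ 2, every valuation σ, all indices i ≠ j, every formula φ, and all finite sets Γ, Δ of located formulas: if σ satisfies Γ : Δ, (φ, i) and σ satisfies Γ : Δ, (φ, j), then σ satisfies Γ : Δ. -/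
/-- Soundness of the coordination rule `(c_{i,j})`. -/
theorem coordination_sound {n : ℕ} (hn : 2 ≤ n) (σ : Formula n → Fin n)
    (i j : Fin n) (hij : i ≠ j) (φ : Formula n) (Γ Δ : Finset (LForm n))
    (h1 : Satisfies σ Γ (insert (φ, i) Δ)) (h2 : Satisfies σ Γ (insert (φ, j) Δ)) :
    Satisfies σ Γ Δ := by
  intro hΓ
  obtain ⟨p, hp, hv⟩ := h1 hΓ
  rcases Finset.mem_insert.1 hp with rfl | hp
  · obtain ⟨q, hq, hv'⟩ := h2 hΓ
    rcases Finset.mem_insert.1 hq with rfl | hq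
    · exact absurd (hv.symm.trans hv') hij
    · exact ⟨q, hq, hv'⟩
  · exact ⟨p, hp, hv⟩
end

section
/- Soundness of the shifting rules: for every n ≥ 2, every valuation σ, every formula φ, all finite sets Γ, Δ of located formulas, and every index i: (1) σ satisfies Γ, (φ, i) : Δ if and only if σ satisfies Γ : Δ ∪ {(φ, m) | m ≠ i}; and (2) for every j ≠ i, if σ satisfies Γ : Δ, (φ, i) then σ satisfies Γ, (φ, j) : Δ. -/
/-- Soundness of the shifting rules. -/
theorem shifting_sound {n : ℕ} (hn : 2 ≤ n) (σ : Formula n → Fin n)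
    (φ : Formula n) (Γ Δ : Finset (LForm n)) (i : Fin n) :
    (Satisfies σ (insert (φ, i) Γ) Δ ↔ Satisfies σ Γ (Δ ∪ locAll φ i)) ∧
    ∀ j : Fin n, j ≠ i →
      Satisfies σ Γ (insert (φ, i) Δ) → Satisfies σ (insert (φ, j) Γ) Δ := by
  constructor
  · constructor
    · intro h hΓ
      by_cases hφ : σ φ = i
      · obtain ⟨p, hp, hsp⟩ := h (by
          intro p hp
          rcases Finset.mem_insert.1 hp with h1 | h1
          · subst h1; exact hφ
          · exact hΓ p h1)
        exact ⟨p, Finset.mem_union_left _ hp, hsp⟩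
      · refine ⟨(φ, σ φ), Finset.mem_union_right _ ?_, rfl⟩
        simp [locAll, Finset.mem_image, Finset.mem_erase, hφ]
    · intro h hΓ
      have hφ : σ φ = i := hΓ (φ, i) (Finset.mem_insert_self _ _)
      obtain ⟨p, hp, hsp⟩ := h (fun p hp => hΓ p (Finset.mem_insert_of_mem hp))
      rcases Finset.mem_union.1 hp with h1 | h1
      · exact ⟨p, h1, hsp⟩
      · exfalso
        simp only [locAll, Finset.mem_image, Finset.mem_erase] at h1
        obtain ⟨m, ⟨hmi, -⟩, rfl⟩ := h1
        simp only [] at hsp; exact hmi (hsp.symm.trans hφ)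
  · intro j hj h hΓ
    have hφ : σ φ = j := hΓ (φ, j) (Finset.mem_insert_self _ _)
    obtain ⟨p, hp, hsp⟩ := h (fun p hp => hΓ p (Finset.mem_insert_of_mem hp))
    rcases Finset.mem_insert.1 hp with h1 | h1
    · exfalso; subst h1; exact hj (hφ ▸ hsp)
    · exact ⟨p, h1, hsp⟩
end

section
/- Soundness of the natural deduction system 𝒩ⁿ for the generalized negations: for every n ≥ 2, every located sequent derivable in 𝒩ⁿ is valid, i.e., satisfied by every valuation obeying the truth table (5.27) for the connectives N₁,…,N_n. -/
/-- The natural deduction proof system `𝒩ⁿ` over located sequents. -/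
inductive Deriv {n : ℕ} (hn : 2 ≤ n) :
    Finset (LForm n) → Finset (LForm n) → Prop
  /-- initial located sequents -/
  | init (Γ Δ : Finset (LForm n)) (φ : Formula n) (i : Fin n) :
      Deriv hn (insert (φ, i) Γ) (insert (φ, i) Δ)
  /-- shifting rule `(→s_i)` -/
  | shiftR {Γ Δ : Finset (LForm n)} {φ : Formula n} {i : Fin n} :
      Deriv hn (insert (φ, i) Γ) Δ → Deriv hn Γ (Δ ∪ locAll φ i)
  /-- shifting rule `(←s_{i,j})` -/
  | shiftL {Γ Δ : Finset (LForm n)} {φ : Formula n} {i j : Fin n} : j ≠ i →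
      Deriv hn Γ (insert (φ, i) Δ) → Deriv hn (insert (φ, j) Γ) Δ
  /-- coordination rule `(c_{i,j})` -/
  | coord {Γ Δ : Finset (LForm n)} {φ : Formula n} {i j : Fin n} : i ≠ j →
      Deriv hn Γ (insert (φ, i) Δ) → Deriv hn Γ (insert (φ, j) Δ) → Deriv hn Γ Δ
  /-- cut rule -/
  | cut {Γ Δ : Finset (LForm n)} {φ : Formula n} {i : Fin n} :
      Deriv hn Γ (insert (φ, i) Δ) → Deriv hn (insert (φ, i) Γ) Δ → Deriv hn Γ Δ
  /-- `(N_k I₁)` -/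
  | NI1 {Γ Δ : Finset (LForm n)} {φ : Formula n} {k : Fin n} :
      Deriv hn Γ (Δ ∪ locAll φ k) →
      Deriv hn Γ (insert (Formula.N k φ, ⟨0, by omega⟩) Δ)
  /-- `(N_k E₁)` -/
  | NE1 {Γ Δ : Finset (LForm n)} {φ : Formula n} {k : Fin n} :
      Deriv hn Γ (insert (Formula.N k φ, ⟨0, by omega⟩) Δ) →
      Deriv hn Γ (Δ ∪ locAll φ k)
  /-- `(N_k I_n)` -/
  | NIn {Γ Δ : Finset (LForm n)} {φ : Formula n} {k : Fin n} :
      Deriv hn Γ (insert (φ, k) Δ) →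
      Deriv hn Γ (insert (Formula.N k φ, ⟨n - 1, by omega⟩) Δ)
  /-- `(N_k E_n)` -/
  | NEn {Γ Δ : Finset (LForm n)} {φ : Formula n} {k : Fin n} :
      Deriv hn Γ (insert (Formula.N k φ, ⟨n - 1, by omega⟩) Δ) →
      Deriv hn Γ (insert (φ, k) Δ)
  /-- `(N_k E_j)` for `j ≠ 1, n` -/
  | NEj {Γ Δ : Finset (LForm n)} {φ : Formula n} {k j : Fin n} :
      j ≠ ⟨0, by omega⟩ → j ≠ ⟨n - 1, by omega⟩ →
      Deriv hn Γ (insert (Formula.N k φ, j) Δ) → Deriv hn Γ Δ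

lemma mem_locAll {n : ℕ} {φ : Formula n} {i : Fin n} {p : LForm n} :
    p ∈ locAll φ i ↔ ∃ m, m ≠ i ∧ p = (φ, m) := by
  simp [locAll, eq_comm, and_comm]

/-- Soundness of `𝒩ⁿ`: every derivable located sequent is valid. -/
theorem soundness_of_N_system {n : ℕ} (hn : 2 ≤ n) (Γ Δ : Finset (LForm n))
    (hD : Deriv hn Γ Δ) :
    ∀ σ : Formula n → Fin n, ObeysTT hn σ → Satisfies σ Γ Δ := by
  intro σ hTT
  induction hD with
  | init Γ Δ φ i =>
    intro h
    exact ⟨(φ, i), Finset.mem_insert_self _ _, h _ (Finset.mem_insert_self _ _)⟩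
  | @shiftR Γ Δ φ i _ ih =>
    intro h
    by_cases hφ : σ φ = i
    · obtain ⟨p, hp, hps⟩ := ih (by
        intro p hp
        rcases Finset.mem_insert.1 hp with rfl | hp
        · exact hφ
        · exact h p hp)
      exact ⟨p, Finset.mem_union_left _ hp, hps⟩
    · refine ⟨(φ, σ φ), Finset.mem_union_right _ ?_, rfl⟩
      exact mem_locAll.2 ⟨σ φ, hφ, rfl⟩
  | @shiftL Γ Δ φ i j hji _ ih =>
    intro h
    have hφ : σ φ = j := h _ (Finset.mem_insert_self _ _)
    obtain ⟨p, hp, hps⟩ := ih (fun p hp => h p (Finset.mem_insert_of_mem hp))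
    rcases Finset.mem_insert.1 hp with rfl | hp
    · exact absurd (hφ ▸ hps : (j : Fin n) = i) hji
    · exact ⟨p, hp, hps⟩
  | @coord Γ Δ φ i j hij _ _ ih1 ih2 =>
    intro h
    obtain ⟨p, hp, hps⟩ := ih1 h
    rcases Finset.mem_insert.1 hp with rfl | hp
    · obtain ⟨q, hq, hqs⟩ := ih2 h
      rcases Finset.mem_insert.1 hq with rfl | hq
      · exact absurd (hps.symm.trans hqs) hij
      · exact ⟨q, hq, hqs⟩
    · exact ⟨p, hp, hps⟩
  | @cut Γ Δ φ i _ _ ih1 ih2 =>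
    intro h
    obtain ⟨p, hp, hps⟩ := ih1 h
    rcases Finset.mem_insert.1 hp with rfl | hp
    · exact ih2 (by
        intro q hq
        rcases Finset.mem_insert.1 hq with rfl | hq
        · exact hps
        · exact h q hq)
    · exact ⟨p, hp, hps⟩
  | @NI1 Γ Δ φ k _ ih =>
    intro h
    obtain ⟨p, hp, hps⟩ := ih h
    rcases Finset.mem_union.1 hp with hp | hp
    · exact ⟨p, Finset.mem_insert_of_mem hp, hps⟩
    · obtain ⟨m, hm, rfl⟩ := mem_locAll.1 hp
      refine ⟨(Formula.N k φ, ⟨0, by omega⟩), Finset.mem_insert_self _ _, ?_⟩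
      exact (hTT k φ).1 (by simpa [hps] using hm)
  | @NE1 Γ Δ φ k _ ih =>
    intro h
    obtain ⟨p, hp, hps⟩ := ih h
    rcases Finset.mem_insert.1 hp with rfl | hp
    · have hφ : σ φ ≠ k := by
        intro hc
        have := (hTT k φ).2 hc
        have h2 : n - 1 = 0 := by simpa [Fin.ext_iff] using (hps.symm.trans this).symm
        omega
      exact ⟨(φ, σ φ), Finset.mem_union_right _ (mem_locAll.2 ⟨σ φ, hφ, rfl⟩), rfl⟩
    · exact ⟨p, Finset.mem_union_left _ hp, hps⟩
  | @NIn Γ Δ φ k _ ih =>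
    intro h
    obtain ⟨p, hp, hps⟩ := ih h
    rcases Finset.mem_insert.1 hp with rfl | hp
    · exact ⟨(Formula.N k φ, ⟨n - 1, by omega⟩), Finset.mem_insert_self _ _,
        (hTT k φ).2 hps⟩
    · exact ⟨p, Finset.mem_insert_of_mem hp, hps⟩
  | @NEn Γ Δ φ k _ ih =>
    intro h
    obtain ⟨p, hp, hps⟩ := ih h
    rcases Finset.mem_insert.1 hp with rfl | hp
    · refine ⟨(φ, k), Finset.mem_insert_self _ _, ?_⟩
      by_contra hc
      have := (hTT k φ).1 hc
      have h2 : n - 1 = 0 := by simpa [Fin.ext_iff] using hps.symm.trans this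
      omega
    · exact ⟨p, Finset.mem_insert_of_mem hp, hps⟩
  | @NEj Γ Δ φ k j hj0 hjn _ ih =>
    intro h
    obtain ⟨p, hp, hps⟩ := ih h
    rcases Finset.mem_insert.1 hp with rfl | hp
    · exfalso
      by_cases hc : σ φ = k
      · exact hjn (hps.symm.trans ((hTT k φ).2 hc))
      · exact hj0 (hps.symm.trans ((hTT k φ).1 hc))
    · exact ⟨p, hp, hps⟩
end

section
/- Admissibility of weakening in 𝒩ⁿ: for every n ≥ 2, if a located sequent Γ : Δ is derivable in 𝒩ⁿ, then for all finite sets Γ′, Δ′ of located formulas the sequents Γ ∪ Γ′ : Δ and Γ : Δ ∪ Δ′ are also derivable in 𝒩ⁿ. -/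
theorem Deriv.mono {n : ℕ} {hn : 2 ≤ n} {Γ Δ Γ₂ Δ₂ : Finset (LForm n)}
    (h : Deriv hn Γ Δ) (hΓ : Γ ⊆ Γ₂) (hΔ : Δ ⊆ Δ₂) : Deriv hn Γ₂ Δ₂ := by
  induction h generalizing Γ₂ Δ₂ with
  | init Γ Δ φ i =>
      rw [← Finset.insert_eq_self.mpr (hΓ (Finset.mem_insert_self _ _)),
          ← Finset.insert_eq_self.mpr (hΔ (Finset.mem_insert_self _ _))]
      exact Deriv.init _ _ _ _
  | shiftR _ ih =>
      obtain ⟨h1, h2⟩ := Finset.union_subset_iff.mp hΔ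
      have := Deriv.shiftR (ih (Finset.insert_subset_insert _ hΓ) h1)
      rwa [Finset.union_eq_left.mpr h2] at this
  | shiftL hji _ ih =>
      have hsub : _ ⊆ Γ₂ := (Finset.insert_subset_iff.mp hΓ).2
      have := Deriv.shiftL hji (ih hsub (Finset.insert_subset_insert _ hΔ))
      rwa [Finset.insert_eq_self.mpr (hΓ (Finset.mem_insert_self _ _))] at this
  | coord hij _ _ ih1 ih2 =>
      exact Deriv.coord hij (ih1 hΓ (Finset.insert_subset_insert _ hΔ))
        (ih2 hΓ (Finset.insert_subset_insert _ hΔ))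
  | cut _ _ ih1 ih2 =>
      exact Deriv.cut (ih1 hΓ (Finset.insert_subset_insert _ hΔ))
        (ih2 (Finset.insert_subset_insert _ hΓ) hΔ)
  | NI1 _ ih =>
      have hmem := hΔ (Finset.mem_insert_self _ _)
      have hsub : _ ⊆ Δ₂ := (Finset.insert_subset_iff.mp hΔ).2
      have := Deriv.NI1 (ih hΓ (Finset.union_subset_union hsub (le_refl _)))
      rwa [Finset.insert_eq_self.mpr hmem] at this
  | NE1 _ ih =>
      obtain ⟨h1, h2⟩ := Finset.union_subset_iff.mp hΔ
      have := Deriv.NE1 (ih hΓ (Finset.insert_subset_insert _ h1))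
      rwa [Finset.union_eq_left.mpr h2] at this
  | NIn _ ih =>
      have hmem := hΔ (Finset.mem_insert_self _ _)
      have hsub : _ ⊆ Δ₂ := (Finset.insert_subset_iff.mp hΔ).2
      have := Deriv.NIn (ih hΓ (Finset.insert_subset_insert _ hsub))
      rwa [Finset.insert_eq_self.mpr hmem] at this
  | NEn _ ih =>
      have hmem := hΔ (Finset.mem_insert_self _ _)
      have hsub : _ ⊆ Δ₂ := (Finset.insert_subset_iff.mp hΔ).2
      have := Deriv.NEn (ih hΓ (Finset.insert_subset_insert _ hsub))
      rwa [Finset.insert_eq_self.mpr hmem] at this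
  | NEj hj1 hjn _ ih =>
      exact Deriv.NEj hj1 hjn (ih hΓ (Finset.insert_subset_insert _ hΔ))

/-- Admissibility of weakening in `𝒩ⁿ`. -/
theorem weakening_admissible {n : ℕ} (hn : 2 ≤ n) (Γ Δ : Finset (LForm n))
    (hD : Deriv hn Γ Δ) (Γ' Δ' : Finset (LForm n)) :
    Deriv hn (Γ ∪ Γ') Δ ∧ Deriv hn Γ (Δ ∪ Δ') :=
  ⟨hD.mono Finset.subset_union_left (le_refl _),
   hD.mono (le_refl _) Finset.subset_union_left⟩
end

section
/- Syntactic uniqueness of truth: let n ≥ 2 and work in the structural fragment of 𝒩ⁿ (initial sequents, shifting, coordination, cut), with derivability-from-hypotheses defined in the usual way. Suppose j ≠ k and both j and k satisfy the interderivability condition (N_t): for every i ∈ {1,…,n}, every formula φ, and all finite sets Γ, Δ of located formulas, the sequents Γ : Δ, (N_i φ, j) and Γ : Δ ∪ {(φ, m) | m ≠ i} are each derivable from the other, and likewise with k in place of j. Then the empty located sequent ∅ : ∅ is derivable. -/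
/-- Derivability from hypotheses `H` in the structural fragment of `𝒩ⁿ`
    (initial sequents, shifting, coordination, cut). -/
inductive DerivH {n : ℕ} (H : Finset (LForm n) → Finset (LForm n) → Prop) :
    Finset (LForm n) → Finset (LForm n) → Prop
  /-- hypotheses -/
  | hyp {Γ Δ : Finset (LForm n)} : H Γ Δ → DerivH H Γ Δ
  /-- initial located sequents -/
  | init (Γ Δ : Finset (LForm n)) (φ : Formula n) (i : Fin n) :
      DerivH H (insert (φ, i) Γ) (insert (φ, i) Δ)
  /-- shifting rule `(→s_i)` -/
  | shiftR {Γ Δ : Finset (LForm n)} {φ : Formula n} {i : Fin n} :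
      DerivH H (insert (φ, i) Γ) Δ → DerivH H Γ (Δ ∪ locAll φ i)
  /-- shifting rule `(←s_{i,j})` -/
  | shiftL {Γ Δ : Finset (LForm n)} {φ : Formula n} {i j : Fin n} : j ≠ i →
      DerivH H Γ (insert (φ, i) Δ) → DerivH H (insert (φ, j) Γ) Δ
  /-- coordination rule `(c_{i,j})` -/
  | coord {Γ Δ : Finset (LForm n)} {φ : Formula n} {i j : Fin n} : i ≠ j →
      DerivH H Γ (insert (φ, i) Δ) → DerivH H Γ (insert (φ, j) Δ) → DerivH H Γ Δ
  /-- cut rule -/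
  | cut {Γ Δ : Finset (LForm n)} {φ : Formula n} {i : Fin n} :
      DerivH H Γ (insert (φ, i) Δ) → DerivH H (insert (φ, i) Γ) Δ → DerivH H Γ Δ

/-- `Γ : Δ` is derivable taking the single sequent `Γ₀ : Δ₀` as a hypothesis. -/
def DerivFrom {n : ℕ} (Γ₀ Δ₀ Γ Δ : Finset (LForm n)) : Prop :=
  DerivH (fun Γ' Δ' => Γ' = Γ₀ ∧ Δ' = Δ₀) Γ Δ

/-- Condition `(N_t)` for the index `j`: for all `i`, `φ`, `Γ`, `Δ` the sequents
    `Γ : Δ, (N_i φ, j)` and `Γ : Δ ∪ {(φ, m) | m ≠ i}` are interderivable. -/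
def NtCond {n : ℕ} (j : Fin n) : Prop :=
  ∀ (i : Fin n) (φ : Formula n) (Γ Δ : Finset (LForm n)),
    DerivFrom Γ (Δ ∪ locAll φ i) Γ (insert (Formula.N i φ, j) Δ) ∧
    DerivFrom Γ (insert (Formula.N i φ, j) Δ) Γ (Δ ∪ locAll φ i)


/-- Substituting a derivation for the hypothesis. -/
theorem DerivH.subst {n : ℕ} {H : Finset (LForm n) → Finset (LForm n) → Prop}
    {Γ₀ Δ₀ Γ Δ : Finset (LForm n)} (h0 : DerivH H Γ₀ Δ₀)
    (h : DerivFrom Γ₀ Δ₀ Γ Δ) : DerivH H Γ Δ := by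
  induction h with
  | hyp h' => obtain ⟨rfl, rfl⟩ := h'; exact h0
  | init Γ Δ φ i => exact .init ..
  | shiftR _ ih => exact .shiftR ih
  | shiftL hne _ ih => exact .shiftL hne ih
  | coord hne _ _ ih1 ih2 => exact .coord hne ih1 ih2
  | cut _ _ ih1 ih2 => exact .cut ih1 ih2

/-- Syntactic uniqueness of truth: if two distinct indices both satisfy `(N_t)`,
    the empty located sequent is derivable. -/
theorem syntactic_uniqueness_of_truth {n : ℕ} (hn : 2 ≤ n) (j k : Fin n)
    (hjk : j ≠ k) (hj : NtCond j) (hk : NtCond k) :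
    DerivH (fun _ _ => False) (∅ : Finset (LForm n)) (∅ : Finset (LForm n)) := by
  set F : Finset (LForm n) → Finset (LForm n) → Prop := fun _ _ => False with hF
  set χ : Formula n := Formula.N j (Formula.atom 0) with hχ
  set θ : Formula n := Formula.N j χ with hθ
  -- Step 1: `{(χ, j)} : Δ` for every `Δ`.
  have L1 : ∀ Δ : Finset (LForm n), DerivH F {(χ, j)} Δ := by
    intro Δ
    have h1 : DerivH F {(χ, j)} (insert (χ, j) Δ) := by
      have := DerivH.init (H := F) (∅ : Finset (LForm n)) Δ χ j
      simpa using this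
    have h2 : DerivH F {(χ, j)} (Δ ∪ locAll (Formula.atom 0) j) :=
      h1.subst ((hj j (Formula.atom 0) {(χ, j)} Δ).2)
    have h3 : DerivH F {(χ, j)} (insert (χ, k) Δ) :=
      h2.subst ((hk j (Formula.atom 0) {(χ, j)} Δ).1)
    have h4 : DerivH F (insert (χ, j) {(χ, j)}) Δ := DerivH.shiftL hjk h3
    simpa using h4
  -- Step 2: `∅ : Δ ∪ locAll χ j` for every `Δ`.
  have L2 : ∀ Δ : Finset (LForm n), DerivH F ∅ (Δ ∪ locAll χ j) := by
    intro Δ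
    have a : DerivH F (insert (χ, j) ∅) (insert (χ, j) (Δ ∪ locAll χ j)) := by
      have := DerivH.init (H := F) (∅ : Finset (LForm n)) (Δ ∪ locAll χ j) χ j
      simpa using this
    have b : DerivH F ∅ (insert (χ, j) (Δ ∪ locAll χ j) ∪ locAll χ j) :=
      DerivH.shiftR a
    have b' : DerivH F ∅ (insert (χ, j) (Δ ∪ locAll χ j)) := by
      have : insert (χ, j) (Δ ∪ locAll χ j) ∪ locAll χ j
          = insert (χ, j) (Δ ∪ locAll χ j) := by
        ext x
        simp only [Finset.mem_insert, Finset.mem_union]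
        tauto
      rwa [this] at b
    have c : DerivH F (insert (χ, j) ∅) (Δ ∪ locAll χ j) := by
      simpa using L1 (Δ ∪ locAll χ j)
    exact DerivH.cut b' c
  -- Step 3: `∅ : (θ, j)` and `∅ : (θ, k)`, then coordinate.
  have m1 : DerivH F ∅ (insert (θ, j) ∅) := by
    have := L2 ∅
    exact (by simpa using this : DerivH F ∅ (∅ ∪ locAll χ j)).subst ((hj j χ ∅ ∅).1)
  have m2 : DerivH F ∅ (insert (θ, k) ∅) := by
    have := L2 ∅
    exact (by simpa using this : DerivH F ∅ (∅ ∪ locAll χ j)).subst ((hk j χ ∅ ∅).1)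
  exact DerivH.coord hjk m1 m2
end

section
/- Syntactic uniqueness of falsity: let n ≥ 2 and work in the structural fragment of 𝒩ⁿ (initial sequents, shifting, coordination, cut), with derivability-from-hypotheses defined in the usual way. Suppose j ≠ k and both j and k satisfy the interderivability condition (N_f): for every i ∈ {1,…,n}, every formula φ, and all finite sets Γ, Δ of located formulas, the sequents Γ : Δ, (N_i φ, j) and Γ : Δ, (φ, i) are each derivable from the other, and likewise with k in place of j. Then the empty located sequent ∅ : ∅ is derivable. -/
/-- Condition `(N_f)` for the index `j`: for all `i`, `φ`, `Γ`, `Δ` the sequents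
    `Γ : Δ, (N_i φ, j)` and `Γ : Δ, (φ, i)` are interderivable. -/
def NfCond {n : ℕ} (j : Fin n) : Prop :=
  ∀ (i : Fin n) (φ : Formula n) (Γ Δ : Finset (LForm n)),
    DerivFrom Γ (insert (φ, i) Δ) Γ (insert (Formula.N i φ, j) Δ) ∧
    DerivFrom Γ (insert (Formula.N i φ, j) Δ) Γ (insert (φ, i) Δ)


lemma derivH_mono {n : ℕ} {H H' : Finset (LForm n) → Finset (LForm n) → Prop}
    {Γ Δ : Finset (LForm n)} (h : DerivH H Γ Δ)
    (f : ∀ Γ' Δ', H Γ' Δ' → DerivH H' Γ' Δ') : DerivH H' Γ Δ := by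
  induction h with
  | hyp h => exact f _ _ h
  | init Γ Δ φ i => exact .init Γ Δ φ i
  | shiftR _ ih => exact .shiftR ih
  | shiftL hji _ ih => exact .shiftL hji ih
  | coord hij _ _ ih1 ih2 => exact .coord hij ih1 ih2
  | cut _ _ ih1 ih2 => exact .cut ih1 ih2

lemma strip_one {n : ℕ} {j k : Fin n} (hjk : j ≠ k) (hj : NfCond j) (hk : NfCond k)
    {Γ Δ : Finset (LForm n)} {ψ : Formula n} {m : Fin n}
    (h : DerivH (fun _ _ => False) Γ (insert (ψ, m) Δ)) :
    DerivH (fun _ _ => False) Γ Δ := by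
  have d1 : DerivH (fun _ _ => False) Γ (insert (Formula.N m ψ, j) Δ) :=
    derivH_mono (hj m ψ Γ Δ).1 (fun Γ' Δ' hh => by obtain ⟨rfl, rfl⟩ := hh; exact h)
  have d2 : DerivH (fun _ _ => False) Γ (insert (Formula.N m ψ, k) Δ) :=
    derivH_mono (hk m ψ Γ Δ).1 (fun Γ' Δ' hh => by obtain ⟨rfl, rfl⟩ := hh; exact h)
  exact .coord hjk d1 d2

lemma strip_all {n : ℕ} {j k : Fin n} (hjk : j ≠ k) (hj : NfCond j) (hk : NfCond k)
    {Γ : Finset (LForm n)} (Δ : Finset (LForm n))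
    (h : DerivH (fun _ _ => False) Γ Δ) :
    DerivH (fun _ _ => False) Γ (∅ : Finset (LForm n)) := by
  induction Δ using Finset.induction_on with
  | empty => exact h
  | insert _ _ hni ih => exact ih (strip_one hjk hj hk h)

/-- Syntactic uniqueness of falsity: if two distinct indices both satisfy `(N_f)`,
    the empty located sequent is derivable. -/
theorem syntactic_uniqueness_of_falsity {n : ℕ} (hn : 2 ≤ n) (j k : Fin n)
    (hjk : j ≠ k) (hj : NfCond j) (hk : NfCond k) :
    DerivH (fun _ _ => False) (∅ : Finset (LForm n)) (∅ : Finset (LForm n)) := by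
  have h0 : DerivH (fun _ _ => False) (insert (Formula.atom 0, j) (∅ : Finset (LForm n)))
      (insert (Formula.atom 0, j) (∅ : Finset (LForm n))) := .init ∅ ∅ _ _
  have h1 := DerivH.shiftR h0
  have h2 := strip_all hjk hj hk _ h1
  exact h2
end

section
/- Soundness of the introduction/elimination pair for N_k at v₁: for every n ≥ 2, every valuation σ, every index k, every formula φ, and all finite sets Γ, Δ of located formulas: σ satisfies Γ : Δ, (N_k φ, 1) if and only if σ satisfies Γ : Δ ∪ {(φ, j) | j ≠ k}. (Joint soundness of the rules (N_k I₁) and (N_k E₁).) -/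
/-- Joint soundness of the rules `(N_k I₁)` and `(N_k E₁)`. -/
theorem NI1_NE1_sound {n : ℕ} (hn : 2 ≤ n) (σ : Formula n → Fin n)
    (hσ : ObeysTT hn σ) (k : Fin n) (φ : Formula n) (Γ Δ : Finset (LForm n)) :
    Satisfies σ Γ (insert (Formula.N k φ, (⟨0, by omega⟩ : Fin n)) Δ) ↔
      Satisfies σ Γ (Δ ∪ locAll φ k) := by
  have key : σ (Formula.N k φ) = (⟨0, by omega⟩ : Fin n) ↔ σ φ ≠ k := by
    constructor
    · intro h hk
      have := (hσ k φ).2 hk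
      rw [this] at h
      have : n - 1 = 0 := congrArg Fin.val h
      omega
    · exact (hσ k φ).1
  constructor <;> intro h hΓ <;> obtain ⟨p, hp, hpv⟩ := h hΓ
  · rcases Finset.mem_insert.mp hp with h1 | h1
    · subst h1
      have hne : σ φ ≠ k := key.mp hpv
      refine ⟨(φ, σ φ), Finset.mem_union_right _ ?_, rfl⟩
      simp [locAll, hne]
    · exact ⟨p, Finset.mem_union_left _ h1, hpv⟩
  · rcases Finset.mem_union.mp hp with h1 | h1
    · exact ⟨p, Finset.mem_insert_of_mem h1, hpv⟩
    · simp only [locAll, Finset.mem_image, Finset.mem_erase] at h1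
      obtain ⟨m, ⟨hm, -⟩, rfl⟩ := h1
      refine ⟨_, Finset.mem_insert_self _ _, key.mpr ?_⟩
      simp at hpv; rw [hpv]; exact hm
end
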